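/- arXiv:2508.18487 — 7 statements merged into one kernel-verified Lean document; each statement's English description precedes it below -/
import Mathlib

section
/- For all integers n ≥ 2k ≥ 4, the map that deletes the largest element of each stable k-subset of [n] is a graph homomorphism from the Schrijver graph SG(n, k) to the Schrijver graph SG(n−2, k−1). -/
universe u

/-- An orientation of a simple graph: each edge receives exactly one of its two directions. -/
structure GraphOrientation {V : Type u} (G : SimpleGraph V) where
  dir : V → V → Prop
  adj_iff : ∀ u v, G.Adj u v ↔ (dir u v ∨ dir v u)
  asymm : ∀ u v, dir u v → ¬ dir v u

/-- The closed out-neighborhood of a vertex in an orientation. -/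
def GraphOrientation.closedOutNbhd {V : Type u} {G : SimpleGraph V}
    (D : GraphOrientation G) (v : V) : Set V :=
  insert v {u | D.dir v u}

/-- The directed local chromatic number of an oriented graph: the least `n` such that some
proper coloring of the underlying graph puts at most `n` colors on every closed
out-neighborhood. -/
noncomputable def psiD {V : Type u} {G : SimpleGraph V} (D : GraphOrientation G) : ℕ∞ :=
  sInf {n : ℕ∞ | ∃ c : V → ℕ, (∀ u w, G.Adj u w → c u ≠ c w) ∧
    ∀ v, (c '' D.closedOutNbhd v).encard ≤ n}

/-- `ψ_{d,min}`: the minimum of `ψ_d` over all orientations of `G`. -/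
noncomputable def psiDMin {V : Type u} (G : SimpleGraph V) : ℕ∞ :=
  ⨅ D : GraphOrientation G, psiD D

/-- `f : ZMod n → V` describes a cycle of length `n` in `G`. -/
def SimpleGraph.IsCycleMap {V : Type u} (G : SimpleGraph V) {n : ℕ} (f : ZMod n → V) : Prop :=
  Function.Injective f ∧ ∀ i, G.Adj (f i) (f (i + 1))

/-- The cycle described by `f` is alternating with respect to the direction relation `D`:
exactly one of its vertices is neither a source nor a sink of the cycle. -/
def IsAltCycle {V : Type u} (D : V → V → Prop) {n : ℕ} (f : ZMod n → V) : Prop :=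
  ∃! i : ZMod n,
    ¬ ((D (f i) (f (i - 1)) ∧ D (f i) (f (i + 1))) ∨
       (D (f (i - 1)) (f i) ∧ D (f (i + 1)) (f i)))

/-- The orientation `D` of `G` contains an alternating odd cycle. -/
def HasAltOddCycle {V : Type u} {G : SimpleGraph V} (D : GraphOrientation G) : Prop :=
  ∃ (n : ℕ) (f : ZMod n → V), Odd n ∧ G.IsCycleMap f ∧ IsAltCycle D.dir f

/-- The odd girth of `G`: the length of a shortest odd cycle. -/
noncomputable def oddGirth {V : Type u} (G : SimpleGraph V) : ℕ :=
  sInf {n | Odd n ∧ ∃ f : ZMod n → V, G.IsCycleMap f}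

/-- The symmetric shift graph `S_m`. -/
def shiftGraph (m : ℕ) : SimpleGraph {p : Fin m × Fin m // p.1 ≠ p.2} where
  Adj x y := x.1.2 = y.1.1 ∨ x.1.1 = y.1.2
  symm := ⟨fun _ _ h => h.elim (fun h => Or.inr h.symm) (fun h => Or.inl h.symm)⟩
  loopless := ⟨fun x h => h.elim (fun h => x.2 h.symm) (fun h => x.2 h)⟩

/-- The Kneser graph `KG(n,k)`. -/
def kneserGraph (n k : ℕ) : SimpleGraph {A : Finset (Fin n) // A.card = k} where
  Adj A B := Disjoint A.1 B.1 ∧ A ≠ B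
  symm := ⟨fun _ _ h => ⟨h.1.symm, h.2.symm⟩⟩
  loopless := ⟨fun _ h => h.2 rfl⟩

/-- A subset of `Fin n` (thought of as `[n]` arranged cyclically) is stable if it contains
no two cyclically consecutive elements. -/
def IsStableSet {n : ℕ} (A : Finset (Fin n)) : Prop :=
  ∀ i ∈ A, ∀ j ∈ A, (i.val + 1) % n ≠ j.val

/-- The Schrijver graph `SG(n,k)`. -/
def schrijverGraph (n k : ℕ) :
    SimpleGraph {A : Finset (Fin n) // A.card = k ∧ IsStableSet A} where
  Adj A B := Disjoint A.1 B.1 ∧ A ≠ B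
  symm := ⟨fun _ _ h => ⟨h.1.symm, h.2.symm⟩⟩
  loopless := ⟨fun _ h => h.2 rfl⟩

/-- The `r`-level generalized Mycielskian `M_r(G)`; `none` is the apex vertex `z`. -/
def genMycielskian {V : Type u} (G : SimpleGraph V) (r : ℕ) :
    SimpleGraph (Option (V × Fin r)) where
  Adj x y :=
    match x, y with
    | some (u, i), some (v, j) =>
        G.Adj u v ∧ (i.val + 1 = j.val ∨ j.val + 1 = i.val ∨ (i.val = 0 ∧ j.val = 0))
    | some (_, i), none => i.val = r - 1
    | none, some (_, j) => j.val = r - 1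
    | none, none => False
  symm := by
    constructor
    rintro (_ | ⟨u, i⟩) (_ | ⟨v, j⟩) h
    · exact h
    · exact h
    · exact h
    · exact ⟨h.1.symm, by tauto⟩
  loopless := by
    constructor
    rintro (_ | ⟨u, i⟩) h
    · exact h
    · exact G.loopless.irrefl u h.1

theorem statement4 (n k : ℕ) (hk : 2 ≤ k) (hn : 2 * k ≤ n) :
    ∃ φ : schrijverGraph n k →g schrijverGraph (n - 2) (k - 1),
      ∀ A : {A : Finset (Fin n) // A.card = k ∧ IsStableSet A},
        Finset.image (Fin.castLE (by omega : n - 2 ≤ n)) (φ A).1 =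
          A.1.erase (A.1.max' (Finset.card_pos.mp (by rw [A.2.1]; omega))) := by
  classical
  have hle : n - 2 ≤ n := by omega
  set e : Fin (n - 2) → Fin n := Fin.castLE hle with he
  have einj : Function.Injective e := Fin.castLE_injective hle
  have hpos : ∀ A : {A : Finset (Fin n) // A.card = k ∧ IsStableSet A},
      0 < A.1.card := fun A => by rw [A.2.1]; omega
  let m : {A : Finset (Fin n) // A.card = k ∧ IsStableSet A} → Fin n :=
    fun A => A.1.max' (Finset.card_pos.mp (hpos A))
  have hmmem : ∀ A, m A ∈ A.1 := fun A => Finset.max'_mem _ _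
  have hlt : ∀ A, ∀ x ∈ A.1, x ≠ m A → x.val < (m A).val := by
    intro A x hx hne
    exact lt_of_le_of_ne (Finset.le_max' _ _ hx) (fun h => hne (Fin.ext h))
  have hbound : ∀ A : {A : Finset (Fin n) // A.card = k ∧ IsStableSet A}, ∀ x ∈ A.1.erase (m A), x.val < n - 2 := by
    intro A x hx
    obtain ⟨hxm, hxA⟩ := Finset.mem_erase.mp hx
    have hxlt : x.val < (m A).val := hlt A x hxA hxm
    have hmn : (m A).val < n := (m A).isLt
    by_contra hge
    push_neg at hge
    have hx2 : x.val = n - 2 := by omega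
    have hm1 : (m A).val = n - 1 := by omega
    have h2 : (x.val + 1) % n = n - 1 := by
      have h3 : x.val + 1 = n - 1 := by omega
      rw [h3, Nat.mod_eq_of_lt (by omega)]
    exact A.2.2 x hxA (m A) (hmmem A) (by rw [h2, hm1])
  let P : {A : Finset (Fin n) // A.card = k ∧ IsStableSet A} → Finset (Fin (n - 2)) :=
    fun A => (A.1.erase (m A)).preimage e einj.injOn
  have himg : ∀ A : {A : Finset (Fin n) // A.card = k ∧ IsStableSet A}, (P A).image e = A.1.erase (m A) := by
    intro A
    rw [Finset.image_preimage]
    apply Finset.filter_true_of_mem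
    intro x hx
    exact ⟨⟨x.val, hbound A x hx⟩, Fin.ext rfl⟩
  have hmemP : ∀ A : {A : Finset (Fin n) // A.card = k ∧ IsStableSet A}, ∀ i ∈ P A, e i ∈ A.1.erase (m A) := by
    intro A i hi
    rw [← himg A]
    exact Finset.mem_image_of_mem e hi
  have hcard : ∀ A : {A : Finset (Fin n) // A.card = k ∧ IsStableSet A}, (P A).card = k - 1 := by
    intro A
    have h1 := Finset.card_image_of_injective (P A) einj
    rw [himg A, Finset.card_erase_of_mem (hmmem A), A.2.1] at h1
    omega
  have hstab : ∀ A : {A : Finset (Fin n) // A.card = k ∧ IsStableSet A}, IsStableSet (P A) := by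
    intro A i hi j hj heq
    obtain ⟨hinm, hiA⟩ := Finset.mem_erase.mp (hmemP A i hi)
    obtain ⟨hjnm, hjA⟩ := Finset.mem_erase.mp (hmemP A j hj)
    have hiv : (e i).val = i.val := rfl
    have hjv : (e j).val = j.val := rfl
    have hilt : i.val < n - 2 := i.isLt
    have hjlt : j.val < n - 2 := j.isLt
    have hn4 : 4 ≤ n := by omega
    by_cases h : i.val + 1 < n - 2
    · rw [Nat.mod_eq_of_lt h] at heq
      exact A.2.2 (e i) hiA (e j) hjA (by rw [hiv, hjv, Nat.mod_eq_of_lt (by omega), heq])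
    · have hi1 : i.val + 1 = n - 2 := by omega
      have hj0 : j.val = 0 := by
        rw [hi1, Nat.mod_self] at heq
        omega
      have himlt : i.val < (m A).val := hlt A (e i) hiA hinm
      have hmn : (m A).val < n := (m A).isLt
      rcases (by omega : (m A).val = n - 2 ∨ (m A).val = n - 1) with hm | hm
      · exact A.2.2 (e i) hiA (m A) (hmmem A)
          (by rw [hiv, hi1, Nat.mod_eq_of_lt (by omega), hm])
      · refine A.2.2 (m A) (hmmem A) (e j) hjA ?_
        rw [hjv, hj0, hm]
        have : n - 1 + 1 = n := by omega
        rw [this, Nat.mod_self]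
  refine ⟨⟨fun A => ⟨P A, hcard A, hstab A⟩, ?_⟩, ?_⟩
  · intro A B hAB
    constructor
    · rw [Finset.disjoint_left]
      intro x hxA hxB
      exact Finset.disjoint_left.mp hAB.1
        (Finset.mem_erase.mp (hmemP A x hxA)).2
        (Finset.mem_erase.mp (hmemP B x hxB)).2
    · intro hPeq
      have hP : P A = P B := congrArg Subtype.val hPeq
      have hE : A.1.erase (m A) = B.1.erase (m B) := by
        rw [← himg A, ← himg B, hP]
      have hne : (A.1.erase (m A)).Nonempty := by
        rw [← Finset.card_pos, Finset.card_erase_of_mem (hmmem A), A.2.1]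
        omega
      have hdis : Disjoint (A.1.erase (m A)) (B.1.erase (m B)) :=
        (hAB.1.mono (Finset.erase_subset _ _) (Finset.erase_subset _ _))
      rw [hE] at hne
      rw [hE] at hdis
      exact hne.ne_empty (Finset.disjoint_self_iff_empty _ |>.mp hdis)
  · intro A
    exact himg A
end

section
/- For all integers r₁, r₂ ≥ 2, there exists a graph homomorphism from the iterated generalized Mycielskian M_{r₂}(M_{r₁}(K₂)) to the symmetric shift graph S_4; consequently ψ_{d,min}(M_{r₂}(M_{r₁}(K₂))) = 2. -/
universe u

/-! ### Auxiliary construction for `statement8` -/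

def s8row0 : ℕ → Fin 4 × Fin 4
  | 0 => (1,0) | 1 => (1,2) | 2 => (3,0) | 3 => (1,2) | 4 => (1,0) | _+5 => (0,1)
def s8row1 : ℕ → Fin 4 × Fin 4
  | 0 => (2,3) | 1 => (0,3) | 2 => (3,1) | 3 => (0,2) | 4 => (2,0) | _+5 => (0,1)
def s8row2 : ℕ → Fin 4 × Fin 4
  | 0 => (1,0) | 1 => (0,3) | 2 => (3,1) | 3 => (0,2) | 4 => (1,0) | _+5 => (0,1)
def s8row3 : ℕ → Fin 4 × Fin 4
  | 0 => (1,0) | 1 => (0,3) | 2 => (3,1) | 3 => (0,1) | 4 => (1,0) | _+5 => (0,1)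

def s8rowT : ℕ → ℕ → Fin 4 × Fin 4
  | 0, k => s8row0 k
  | 1, k => s8row1 k
  | 2, k => s8row2 k
  | _+3, k => s8row3 k

/-- adjacency in the shift graph, on raw pairs -/
def s8adj (p q : Fin 4 × Fin 4) : Prop := p.2 = q.1 ∨ p.1 = q.2

instance (p q : Fin 4 × Fin 4) : Decidable (s8adj p q) :=
  inferInstanceAs (Decidable (p.2 = q.1 ∨ p.1 = q.2))

def s8pairOK (a b : ℕ) : Prop := a + 1 = b ∨ b + 1 = a ∨ (a = b ∧ 1 ≤ a)

instance (a b : ℕ) : Decidable (s8pairOK a b) :=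
  inferInstanceAs (Decidable (a + 1 = b ∨ b + 1 = a ∨ (a = b ∧ 1 ≤ a)))

def s8c5 (k k' : ℕ) : Prop :=
  (k = 4 ∧ k' = 1) ∨ (k = 4 ∧ k' = 3) ∨ (k = 1 ∧ k' = 4) ∨ (k = 3 ∧ k' = 4) ∨
  (k = 1 ∧ k' = 2) ∨ (k = 2 ∧ k' = 1) ∨ (k = 0 ∧ k' = 2) ∨ (k = 2 ∧ k' = 0) ∨
  (k = 0 ∧ k' = 3) ∨ (k = 3 ∧ k' = 0)

instance (k k' : ℕ) : Decidable (s8c5 k k') :=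
  inferInstanceAs (Decidable ((k = 4 ∧ k' = 1) ∨ (k = 4 ∧ k' = 3) ∨ (k = 1 ∧ k' = 4) ∨
    (k = 3 ∧ k' = 4) ∨ (k = 1 ∧ k' = 2) ∨ (k = 2 ∧ k' = 1) ∨ (k = 0 ∧ k' = 2) ∨
    (k = 2 ∧ k' = 0) ∨ (k = 0 ∧ k' = 3) ∨ (k = 3 ∧ k' = 0)))

lemma s8rowT_ne : ∀ t k : ℕ, (s8rowT t k).1 ≠ (s8rowT t k).2 := by
  intro t k
  rcases t with _|_|_|t <;> rcases k with _|_|_|_|_|k <;>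
    (simp only [s8rowT, s8row0, s8row1, s8row2, s8row3]; decide)

lemma s8compat : ∀ (a b : Fin 4) (k k' : Fin 5), s8pairOK a.val b.val → s8c5 k.val k'.val →
    s8adj (s8rowT a.val k.val) (s8rowT b.val k'.val) := by decide

lemma s8zrow : ∀ k : Fin 5, s8adj (0,1) (s8rowT 0 k.val) ∧ s8adj (s8rowT 0 k.val) (0,1) := by
  decide

def s8fpar (r i : ℕ) : ℕ := if i ≠ 0 ∧ i % 2 = (r - 1) % 2 then 1 else 0

def s8phi (r₁ : ℕ) : Option (Fin 2 × Fin r₁) → ℕ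
  | none => 4
  | some (u, i) => 2 * u.val + s8fpar r₁ i.val

lemma s8phi_le (r₁ : ℕ) : ∀ w, s8phi r₁ w ≤ 4 := by
  rintro (_ | ⟨u, i⟩)
  · exact Nat.le_refl 4
  · have h1 := u.isLt
    have h2 : s8fpar r₁ i.val ≤ 1 := by unfold s8fpar; split <;> omega
    show 2 * u.val + s8fpar r₁ i.val ≤ 4
    omega

lemma s8c5_of : ∀ (a b fi fj : Fin 2), a ≠ b → ¬(fi.val = 1 ∧ fj.val = 1) →
    s8c5 (2 * a.val + fi.val) (2 * b.val + fj.val) := by decide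

lemma s8c5_z : ∀ v : Fin 2, s8c5 4 (2 * v.val + 1) ∧ s8c5 (2 * v.val + 1) 4 := by decide

lemma s8phi_adj (r₁ : ℕ) (h₁ : 2 ≤ r₁) :
    ∀ w w', (genMycielskian (⊤ : SimpleGraph (Fin 2)) r₁).Adj w w' →
      s8c5 (s8phi r₁ w) (s8phi r₁ w') := by
  rintro (_ | ⟨u, i⟩) (_ | ⟨v, j⟩) h
  · exact h.elim
  · have hj : j.val = r₁ - 1 := h
    have hv := v.isLt
    have hf : s8fpar r₁ j.val = 1 := by unfold s8fpar; split <;> omega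
    show s8c5 4 (2 * v.val + s8fpar r₁ j.val)
    rw [hf]
    exact (s8c5_z v).1
  · have hi : i.val = r₁ - 1 := h
    have hu := u.isLt
    have hf : s8fpar r₁ i.val = 1 := by unfold s8fpar; split <;> omega
    show s8c5 (2 * u.val + s8fpar r₁ i.val) 4
    rw [hf]
    exact (s8c5_z u).2
  · obtain ⟨huv, hij⟩ := h
    rw [SimpleGraph.top_adj] at huv
    have hfi : (s8fpar r₁ i.val = 0 ∧ ¬(i.val ≠ 0 ∧ i.val % 2 = (r₁ - 1) % 2)) ∨
        (s8fpar r₁ i.val = 1 ∧ (i.val ≠ 0 ∧ i.val % 2 = (r₁ - 1) % 2)) := by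
      unfold s8fpar
      split
      next hc => exact Or.inr ⟨rfl, hc⟩
      next hc => exact Or.inl ⟨rfl, hc⟩
    have hfj : (s8fpar r₁ j.val = 0 ∧ ¬(j.val ≠ 0 ∧ j.val % 2 = (r₁ - 1) % 2)) ∨
        (s8fpar r₁ j.val = 1 ∧ (j.val ≠ 0 ∧ j.val % 2 = (r₁ - 1) % 2)) := by
      unfold s8fpar
      split
      next hc => exact Or.inr ⟨rfl, hc⟩
      next hc => exact Or.inl ⟨rfl, hc⟩
    have hn : ¬(s8fpar r₁ i.val = 1 ∧ s8fpar r₁ j.val = 1) := by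
      rcases hfi with ⟨e1, c1⟩ | ⟨e1, c1⟩ <;> rcases hfj with ⟨e2, c2⟩ | ⟨e2, c2⟩ <;> omega
    have hbi : s8fpar r₁ i.val < 2 := by omega
    have hbj : s8fpar r₁ j.val < 2 := by omega
    show s8c5 (2 * u.val + s8fpar r₁ i.val) (2 * v.val + s8fpar r₁ j.val)
    exact s8c5_of u v ⟨s8fpar r₁ i.val, hbi⟩ ⟨s8fpar r₁ j.val, hbj⟩ huv hn

def s8g (r₁ r₂ : ℕ) : Option (Option (Fin 2 × Fin r₁) × Fin r₂) → Fin 4 × Fin 4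
  | none => (0, 1)
  | some (w, j) => s8rowT (min (r₂ - 1 - j.val) 3) (s8phi r₁ w)

lemma s8g_ne (r₁ r₂ : ℕ) : ∀ v, (s8g r₁ r₂ v).1 ≠ (s8g r₁ r₂ v).2 := by
  rintro (_ | ⟨w, j⟩)
  · simp only [s8g]; decide
  · exact s8rowT_ne _ _

lemma s8main (r₁ r₂ : ℕ) (h₁ : 2 ≤ r₁) (h₂ : 2 ≤ r₂) :
    ∀ x y, (genMycielskian (genMycielskian (⊤ : SimpleGraph (Fin 2)) r₁) r₂).Adj x y →
      s8adj (s8g r₁ r₂ x) (s8g r₁ r₂ y) := by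
  rintro (_ | ⟨w, j⟩) (_ | ⟨w', j'⟩) h
  · exact h.elim
  · have hj : j'.val = r₂ - 1 := h
    have hm : min (r₂ - 1 - j'.val) 3 = 0 := by omega
    show s8adj (0, 1) (s8rowT (min (r₂ - 1 - j'.val) 3) (s8phi r₁ w'))
    rw [hm]
    exact (s8zrow ⟨s8phi r₁ w', by have := s8phi_le r₁ w'; omega⟩).1
  · have hj : j.val = r₂ - 1 := h
    have hm : min (r₂ - 1 - j.val) 3 = 0 := by omega
    show s8adj (s8rowT (min (r₂ - 1 - j.val) 3) (s8phi r₁ w)) (0, 1)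
    rw [hm]
    exact (s8zrow ⟨s8phi r₁ w, by have := s8phi_le r₁ w; omega⟩).2
  · obtain ⟨hw, hjj⟩ := h
    have hc := s8phi_adj r₁ h₁ w w' hw
    have hj1 := j.isLt; have hj2 := j'.isLt
    have hp : s8pairOK (min (r₂ - 1 - j.val) 3) (min (r₂ - 1 - j'.val) 3) := by
      unfold s8pairOK; omega
    show s8adj (s8rowT (min (r₂ - 1 - j.val) 3) (s8phi r₁ w))
        (s8rowT (min (r₂ - 1 - j'.val) 3) (s8phi r₁ w'))
    exact s8compat ⟨_, by omega⟩ ⟨_, by omega⟩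
      ⟨s8phi r₁ w, by have := s8phi_le r₁ w; omega⟩
      ⟨s8phi r₁ w', by have := s8phi_le r₁ w'; omega⟩ hp hc

theorem statement8 (r₁ r₂ : ℕ) (h₁ : 2 ≤ r₁) (h₂ : 2 ≤ r₂) :
    Nonempty
        (genMycielskian (genMycielskian (⊤ : SimpleGraph (Fin 2)) r₁) r₂ →g shiftGraph 4) ∧
      psiDMin (genMycielskian (genMycielskian (⊤ : SimpleGraph (Fin 2)) r₁) r₂) = 2 := by
  have main := s8main r₁ r₂ h₁ h₂
  set H := genMycielskian (genMycielskian (⊤ : SimpleGraph (Fin 2)) r₁) r₂ with hH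
  have gne := s8g_ne r₁ r₂
  constructor
  · exact ⟨⟨fun v => ⟨s8g r₁ r₂ v, gne v⟩, fun {a b} h => main a b h⟩⟩
  · -- the orientation
    have encinj : Function.Injective
        (Encodable.encode (α := Option (Option (Fin 2 × Fin r₁) × Fin r₂))) :=
      Encodable.encode_injective
    set enc := Encodable.encode (α := Option (Option (Fin 2 × Fin r₁) × Fin r₂)) with henc
    let D : GraphOrientation H :=
      { dir := fun u v => H.Adj u v ∧ (s8g r₁ r₂ u).2 = (s8g r₁ r₂ v).1 ∧
          ((s8g r₁ r₂ v).2 = (s8g r₁ r₂ u).1 → enc u < enc v)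
        adj_iff := by
          intro u v
          constructor
          · intro h
            have hne : enc u ≠ enc v := fun e => H.ne_of_adj h (encinj e)
            rcases main u v h with h1 | h1
            · by_cases h2 : (s8g r₁ r₂ v).2 = (s8g r₁ r₂ u).1
              · rcases Nat.lt_or_ge (enc u) (enc v) with hlt | hge
                · exact Or.inl ⟨h, h1, fun _ => hlt⟩
                · exact Or.inr ⟨H.adj_symm h, h2, fun _ => by omega⟩
              · exact Or.inl ⟨h, h1, fun hh => absurd hh h2⟩
            · by_cases h2 : (s8g r₁ r₂ u).2 = (s8g r₁ r₂ v).1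
              · rcases Nat.lt_or_ge (enc u) (enc v) with hlt | hge
                · exact Or.inl ⟨h, h2, fun _ => hlt⟩
                · exact Or.inr ⟨H.adj_symm h, h1.symm, fun _ => by omega⟩
              · exact Or.inr ⟨H.adj_symm h, h1.symm, fun hh => absurd hh h2⟩
          · rintro (⟨h, -, -⟩ | ⟨h, -, -⟩)
            · exact h
            · exact H.adj_symm h
        asymm := by
          rintro u v ⟨h, e1, f1⟩ ⟨h', e2, f2⟩
          have t1 := f1 e2
          have t2 := f2 e1
          omega }
    have hub : psiD D ≤ 2 := by
      apply sInf_le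
      refine ⟨fun v => ((s8g r₁ r₂ v).1 : ℕ), ?_, ?_⟩
      · intro u w hadj
        rcases main u w hadj with h1 | h1
        · intro e
          exact gne u (by rw [h1]; exact Fin.val_injective e)
        · intro e
          exact gne w (by rw [← h1]; exact (Fin.val_injective e).symm)
      · intro v
        have hsub : (fun x => ((s8g r₁ r₂ x).1 : ℕ)) '' D.closedOutNbhd v ⊆
            {((s8g r₁ r₂ v).1 : ℕ), ((s8g r₁ r₂ v).2 : ℕ)} := by
          rintro _ ⟨x, hx, rfl⟩
          rcases hx with rfl | hx
          · exact Or.inl rfl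
          · obtain ⟨-, e, -⟩ := hx
            exact Or.inr (congrArg Fin.val e.symm)
        refine le_trans (Set.encard_mono hsub) ?_
        refine le_trans (Set.encard_insert_le _ _) ?_
        rw [Set.encard_singleton]
        exact le_of_eq one_add_one_eq_two
    have hlb : ∀ D' : GraphOrientation H, (2 : ℕ∞) ≤ psiD D' := by
      intro D'
      apply le_sInf
      rintro n ⟨c, hc, hb⟩
      have ha : H.Adj (some (some (⟨0, by omega⟩, ⟨0, by omega⟩), ⟨0, by omega⟩))
          (some (some (⟨1, by omega⟩, ⟨0, by omega⟩), ⟨0, by omega⟩)) := by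
        exact ⟨⟨(SimpleGraph.top_adj _ _).mpr (Fin.ne_of_val_ne (show (0:ℕ) ≠ 1 by omega)), Or.inr (Or.inr ⟨rfl, rfl⟩)⟩,
          Or.inr (Or.inr ⟨rfl, rfl⟩)⟩
      set a := (some (some (⟨0, by omega⟩, ⟨0, by omega⟩), ⟨0, by omega⟩) :
        Option (Option (Fin 2 × Fin r₁) × Fin r₂)) with hav
      set b := (some (some (⟨1, by omega⟩, ⟨0, by omega⟩), ⟨0, by omega⟩) :
        Option (Option (Fin 2 × Fin r₁) × Fin r₂)) with hbv
      have hab : c a ≠ c b := hc a b ha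
      rcases (D'.adj_iff a b).mp ha with hd | hd
      · have hsub : ({c a, c b} : Set ℕ) ⊆ c '' D'.closedOutNbhd a := by
          rintro x (rfl | rfl)
          · exact ⟨a, Or.inl rfl, rfl⟩
          · exact ⟨b, Or.inr hd, rfl⟩
        have h2 := Set.encard_mono hsub
        rw [Set.encard_pair hab] at h2
        exact h2.trans (hb a)
      · have hsub : ({c b, c a} : Set ℕ) ⊆ c '' D'.closedOutNbhd b := by
          rintro x (rfl | rfl)
          · exact ⟨b, Or.inl rfl, rfl⟩
          · exact ⟨a, Or.inr hd, rfl⟩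
        have h2 := Set.encard_mono hsub
        rw [Set.encard_pair hab.symm] at h2
        exact h2.trans (hb b)
    refine le_antisymm ?_ (le_iInf hlb)
    exact le_trans (iInf_le _ D) hub
end

section
/- For all positive integers r and m, there is no graph homomorphism from the wheel W_{2r+1} = M₁(M_r(K₂)) (the graph consisting of a cycle C_{2r+1} together with one additional vertex adjacent to all cycle vertices) to the symmetric shift graph S_m; equivalently, every orientation of W_{2r+1} contains an alternating odd cycle. -/
universe u

section Aux

variable {V : Type u} {G : SimpleGraph V}

private lemma parity_flipN (n : ℕ) (hn : Odd n) (d : ℕ → Prop)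
    (h : ∀ k, d (k+1) ↔ ¬ d k) (hper : d n ↔ d 0) : False := by
  have H : ∀ k, d k ↔ (Even k ↔ d 0) := by
    intro k
    induction k with
    | zero => simp
    | succ k ih => rw [h k, ih, Nat.even_add_one]; tauto
  have h2 : ¬ Even n := by
    rcases hn with ⟨t, rfl⟩
    rintro ⟨s, hs⟩
    omega
  have h1 := H n
  tauto

private lemma shiftKey {α : Type*} {a b p1 p2 q1 q2 : α} (hab : a ≠ b) (hp : p1 ≠ p2)
    (hq : q1 ≠ q2) (h1 : p2 = a ∨ p1 = b) (h2 : q2 = a ∨ q1 = b)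
    (h3 : p2 = q1 ∨ p1 = q2) : (q1 = b ↔ ¬ p1 = b) := by
  rcases h1 with h1|h1 <;> rcases h2 with h2|h2 <;> rcases h3 with h3|h3 <;> subst_vars <;>
    simp_all <;> tauto

private def triF (x y z : V) : ZMod 3 → V := fun i => if i = 0 then x else if i = 1 then y else z

private lemma triF_zero (x y z : V) : triF x y z 0 = x := rfl

private lemma triF_one (x y z : V) : triF x y z 1 = y := by
  unfold triF; rw [if_neg (by decide), if_pos rfl]

private lemma triF_two (x y z : V) : triF x y z 2 = z := by
  unfold triF; rw [if_neg (by decide), if_neg (by decide)]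

private lemma trich3 : ∀ i : ZMod 3, i = 0 ∨ i = 1 ∨ i = 2 := by decide

set_option maxHeartbeats 2000000 in
private lemma alt_triangle (D : GraphOrientation G) {x y z : V}
    (hxy : G.Adj x y) (hyz : G.Adj y z) (hzx : G.Adj z x)
    (h1 : ¬(D.dir x y ∧ D.dir y z ∧ D.dir z x))
    (h2 : ¬(D.dir y x ∧ D.dir z y ∧ D.dir x z)) :
    HasAltOddCycle D := by
  classical
  have hyx : D.dir y x ↔ ¬ D.dir x y :=
    ⟨fun h h' => D.asymm x y h' h, fun h => ((D.adj_iff x y).mp hxy).resolve_left h⟩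
  have hzy : D.dir z y ↔ ¬ D.dir y z :=
    ⟨fun h h' => D.asymm y z h' h, fun h => ((D.adj_iff y z).mp hyz).resolve_left h⟩
  have hxz : D.dir x z ↔ ¬ D.dir z x :=
    ⟨fun h h' => D.asymm z x h' h, fun h => ((D.adj_iff z x).mp hzx).resolve_left h⟩
  have hnexy := hxy.ne
  have hneyz := hyz.ne
  have hnezx := hzx.ne
  have e0m : (0:ZMod 3) - 1 = 2 := by decide
  have e0p : (0:ZMod 3) + 1 = 1 := by decide
  have e1m : (1:ZMod 3) - 1 = 0 := by decide
  have e1p : (1:ZMod 3) + 1 = 2 := by decide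
  have e2m : (2:ZMod 3) - 1 = 1 := by decide
  have e2p : (2:ZMod 3) + 1 = 0 := by decide
  refine ⟨3, triF x y z, ⟨1, rfl⟩, ⟨?_, ?_⟩, ?_⟩
  · intro i j hij
    rcases trich3 i with rfl|rfl|rfl <;> rcases trich3 j with rfl|rfl|rfl <;>
      simp_all [triF_zero, triF_one, triF_two]
  · intro i
    rcases trich3 i with rfl|rfl|rfl
    · rw [triF_zero, e0p, triF_one]; exact hxy
    · rw [triF_one, e1p, triF_two]; exact hyz
    · rw [triF_two, e2p, triF_zero]; exact hzx
  · by_cases a : D.dir x y <;> by_cases b : D.dir y z <;> by_cases c : D.dir z x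
    · exact absurd ⟨a, b, c⟩ h1
    · -- TTF : witness 1
      refine ⟨1, ?_, ?_⟩
      · simp only [e1m, e1p, triF_zero, triF_one, triF_two]; tauto
      · intro j hj
        rcases trich3 j with rfl|rfl|rfl <;>
          simp only [e0m, e0p, e1m, e1p, e2m, e2p, triF_zero, triF_one, triF_two] at hj <;>
          first | rfl | tauto
    · -- TFT : witness 0
      refine ⟨0, ?_, ?_⟩
      · simp only [e0m, e0p, triF_zero, triF_one, triF_two]; tauto
      · intro j hj
        rcases trich3 j with rfl|rfl|rfl <;>
          simp only [e0m, e0p, e1m, e1p, e2m, e2p, triF_zero, triF_one, triF_two] at hj <;>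
          first | rfl | tauto
    · -- TFF : witness 2
      refine ⟨2, ?_, ?_⟩
      · simp only [e2m, e2p, triF_zero, triF_one, triF_two]; tauto
      · intro j hj
        rcases trich3 j with rfl|rfl|rfl <;>
          simp only [e0m, e0p, e1m, e1p, e2m, e2p, triF_zero, triF_one, triF_two] at hj <;>
          first | rfl | tauto
    · -- FTT : witness 2
      refine ⟨2, ?_, ?_⟩
      · simp only [e2m, e2p, triF_zero, triF_one, triF_two]; tauto
      · intro j hj
        rcases trich3 j with rfl|rfl|rfl <;>
          simp only [e0m, e0p, e1m, e1p, e2m, e2p, triF_zero, triF_one, triF_two] at hj <;>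
          first | rfl | tauto
    · -- FTF : witness 0
      refine ⟨0, ?_, ?_⟩
      · simp only [e0m, e0p, triF_zero, triF_one, triF_two]; tauto
      · intro j hj
        rcases trich3 j with rfl|rfl|rfl <;>
          simp only [e0m, e0p, e1m, e1p, e2m, e2p, triF_zero, triF_one, triF_two] at hj <;>
          first | rfl | tauto
    · -- FFT : witness 1
      refine ⟨1, ?_, ?_⟩
      · simp only [e1m, e1p, triF_zero, triF_one, triF_two]; tauto
      · intro j hj
        rcases trich3 j with rfl|rfl|rfl <;>
          simp only [e0m, e0p, e1m, e1p, e2m, e2p, triF_zero, triF_one, triF_two] at hj <;>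
          first | rfl | tauto
    · exact absurd ⟨hyx.mpr a, hzy.mpr b, hxz.mpr c⟩ h2


private lemma gm_adj_ss {r : ℕ} {u v : V} {i j : Fin r} :
    (genMycielskian G r).Adj (some (u, i)) (some (v, j)) ↔
      G.Adj u v ∧ (i.val + 1 = j.val ∨ j.val + 1 = i.val ∨ (i.val = 0 ∧ j.val = 0)) := Iff.rfl

private lemma gm_adj_sn {r : ℕ} {u : V} {i : Fin r} :
    (genMycielskian G r).Adj (some (u, i)) none ↔ i.val = r - 1 := Iff.rfl

private lemma gm_adj_ns {r : ℕ} {v : V} {j : Fin r} :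
    (genMycielskian G r).Adj none (some (v, j)) ↔ j.val = r - 1 := Iff.rfl

private def rimAux (r j : ℕ) : Option (Fin 2 × Fin r) :=
  if h0 : j = 0 then none
  else if h1 : j ≤ r then some (⟨(j-1) % 2, Nat.mod_lt _ (by omega)⟩, ⟨r - j, by omega⟩)
  else if h2 : j ≤ 2*r then some (⟨(j-1) % 2, Nat.mod_lt _ (by omega)⟩, ⟨j - r - 1, by omega⟩)
  else none

private def rimN (r k : ℕ) : Option (Fin 2 × Fin r) := rimAux r (k % (2*r+1))

private lemma rimAux_adj (r : ℕ) (hr : 1 ≤ r) {j j' : ℕ}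
    (hc : (j' = j + 1 ∧ j + 1 ≤ 2*r) ∨ (j = 2*r ∧ j' = 0)) :
    (genMycielskian (⊤ : SimpleGraph (Fin 2)) r).Adj (rimAux r j) (rimAux r j') := by
  unfold rimAux
  rcases hc with ⟨rfl, hle⟩ | ⟨rfl, rfl⟩ <;>
    split_ifs <;>
      first
      | omega
      | contradiction
      | (exfalso; omega)
      | (simp only [gm_adj_ns, gm_adj_sn, gm_adj_ss, SimpleGraph.top_adj, ne_eq, Fin.ext_iff,
          Fin.val_mk]
         omega)

private lemma rimN_adj (r : ℕ) (hr : 1 ≤ r) (k : ℕ) :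
    (genMycielskian (⊤ : SimpleGraph (Fin 2)) r).Adj (rimN r k) (rimN r (k+1)) := by
  have h1 : k % (2*r+1) < 2*r+1 := Nat.mod_lt _ (by omega)
  have h2 : (k+1) % (2*r+1) = (k % (2*r+1) + 1) % (2*r+1) := by
    conv_lhs => rw [Nat.add_mod]
    simp
  unfold rimN
  by_cases h : k % (2*r+1) = 2*r
  · rw [h2, h, Nat.mod_self]
    exact rimAux_adj r hr (Or.inr ⟨rfl, rfl⟩)
  · rw [h2, Nat.mod_eq_of_lt (show k % (2*r+1) + 1 < 2*r+1 by omega)]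
    exact rimAux_adj r hr (Or.inl ⟨rfl, by omega⟩)

end Aux

theorem statement9 (r m : ℕ) (hr : 1 ≤ r) (hm : 1 ≤ m) :
    IsEmpty (genMycielskian (genMycielskian (⊤ : SimpleGraph (Fin 2)) r) 1 →g shiftGraph m) ∧
      ∀ D : GraphOrientation (genMycielskian (genMycielskian (⊤ : SimpleGraph (Fin 2)) r) 1),
        HasAltOddCycle D := by
  have hW1 : ∀ x : Option (Fin 2 × Fin r),
      (genMycielskian (genMycielskian (⊤ : SimpleGraph (Fin 2)) r) 1).Adj
        (some (x, (0 : Fin 1))) none := fun _ => rfl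
  have hW2 : ∀ x : Option (Fin 2 × Fin r),
      (genMycielskian (genMycielskian (⊤ : SimpleGraph (Fin 2)) r) 1).Adj
        none (some (x, (0 : Fin 1))) := fun _ => rfl
  have hWadj : ∀ k : ℕ,
      (genMycielskian (genMycielskian (⊤ : SimpleGraph (Fin 2)) r) 1).Adj
        (some (rimN r k, (0 : Fin 1))) (some (rimN r (k+1), (0 : Fin 1))) :=
    fun k => ⟨rimN_adj r hr k, Or.inr (Or.inr ⟨rfl, rfl⟩)⟩
  have hper : rimN r (2*r+1) = rimN r 0 := by
    unfold rimN
    rw [Nat.mod_self, Nat.zero_mod]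
  constructor
  · constructor
    intro φ
    refine parity_flipN (2*r+1) ⟨r, rfl⟩
      (fun k => (φ (some (rimN r k, (0 : Fin 1)))).1.1 = (φ none).1.2) (fun k => ?_) ?_
    · exact shiftKey (φ none).2 (φ (some (rimN r k, (0 : Fin 1)))).2
        (φ (some (rimN r (k+1), (0 : Fin 1)))).2
        (φ.map_adj (hW1 (rimN r k))) (φ.map_adj (hW1 (rimN r (k+1)))) (φ.map_adj (hWadj k))
    · simp only [hper]
  · intro D
    by_contra hno
    have hdir : ∀ k : ℕ,
        (D.dir none (some (rimN r k, (0 : Fin 1))) ∧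
          D.dir (some (rimN r k, (0 : Fin 1))) (some (rimN r (k+1), (0 : Fin 1))) ∧
          D.dir (some (rimN r (k+1), (0 : Fin 1))) none) ∨
        (D.dir (some (rimN r k, (0 : Fin 1))) none ∧
          D.dir (some (rimN r (k+1), (0 : Fin 1))) (some (rimN r k, (0 : Fin 1))) ∧
          D.dir none (some (rimN r (k+1), (0 : Fin 1)))) := by
      intro k
      by_contra hnd
      exact hno (alt_triangle D (hW2 _) (hWadj k) (hW1 _) (not_or.mp hnd).1 (not_or.mp hnd).2)
    refine parity_flipN (2*r+1) ⟨r, rfl⟩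
      (fun k => D.dir (some (rimN r k, (0 : Fin 1))) none) (fun k => ?_) ?_
    · rcases hdir k with ⟨u1, u2, u3⟩ | ⟨u1, u2, u3⟩
      · exact iff_of_true u3 (fun h => D.asymm _ _ u1 h)
      · exact iff_of_false (fun h => D.asymm _ _ u3 h) (not_not_intro u1)
    · simp only [hper]
end

section
/- For any graph G and integers r' ≥ r ≥ 1, there exists a graph homomorphism from M_{r'}(G) to M_r(G); explicitly, the map sending the apex vertex z of M_{r'}(G) to the apex vertex z of M_r(G) and sending (v,i) to (v, max{i−(r'−r), 0}) is such a homomorphism. -/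
universe u

theorem statement12 {V : Type u} (G : SimpleGraph V) (r r' : ℕ) (hr : 1 ≤ r) (h : r ≤ r') :
    ∃ φ : genMycielskian G r' →g genMycielskian G r,
      φ none = none ∧
      ∀ (v : V) (i : Fin r'),
        φ (some (v, i)) = some (v, ⟨i.val - (r' - r), by have := i.isLt; omega⟩) := by
  refine ⟨⟨fun x => match x with
    | none => none
    | some (v, i) => some (v, ⟨i.val - (r' - r), by have := i.isLt; omega⟩), ?_⟩,
    rfl, fun v i => rfl⟩
  rintro (_ | ⟨u, i⟩) (_ | ⟨v, j⟩) hadj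
  · exact hadj
  · simp only [genMycielskian] at hadj ⊢
    have := j.isLt; omega
  · simp only [genMycielskian] at hadj ⊢
    have := i.isLt; omega
  · obtain ⟨ha, hij⟩ := hadj
    exact ⟨ha, by have := i.isLt; have := j.isLt; simp only []; omega⟩
end

section
/- Let G be a graph containing an odd cycle, with odd girth g. If G contains a bipartite subgraph B such that every cycle of length g in G uses at most one edge not belonging to B, then G admits an orientation in which every cycle of length g (i.e., every shortest odd cycle) is alternating. -/
universe u

theorem statement16 {V : Type u} (G : SimpleGraph V)
    (hodd : ∃ n, Odd n ∧ ∃ f : ZMod n → V, G.IsCycleMap f)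
    (B : SimpleGraph V) (hBG : B ≤ G) (hB : B.Colorable 2)
    (hone : ∀ f : ZMod (oddGirth G) → V, G.IsCycleMap f →
      {i : ZMod (oddGirth G) | ¬ B.Adj (f i) (f (i + 1))}.Subsingleton) :
    ∃ D : GraphOrientation G,
      ∀ f : ZMod (oddGirth G) → V, G.IsCycleMap f → IsAltCycle D.dir f := by
  classical
  obtain ⟨c⟩ := hB
  set c2 : V → ZMod 2 := fun v => if c v = 0 then 0 else 1 with hc2
  -- properness of c2 on B
  have hcprop : ∀ u v, B.Adj u v → c2 u ≠ c2 v := by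
    intro u v h
    have hv := c.valid h
    have key : ∀ x y : Fin 2, x ≠ y →
        (if x = 0 then (0 : ZMod 2) else 1) ≠ (if y = 0 then 0 else 1) := by decide
    exact key _ _ hv
  -- ZMod 2 facts
  have ztwo : ∀ x : ZMod 2, x = 0 ∨ x = 1 := by decide
  have zne : ∀ x y : ZMod 2, x ≠ y → y = x + 1 := by decide
  have zflip : ∀ x y : ZMod 2, x = y + 1 → y = x + 1 := by decide
  have z10 : (1 : ZMod 2) ≠ 0 := by decide
  -- the direction relation
  set Dir : V → V → Prop := fun u v =>
    G.Adj u v ∧ ((c2 u ≠ c2 v ∧ c2 u = 0) ∨ (c2 u = c2 v ∧ WellOrderingRel u v)) with hDir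
  have hdir01 : ∀ u w, G.Adj u w → c2 u = 0 → c2 w = 1 → Dir u w := by
    intro u w h h0 h1
    exact ⟨h, Or.inl ⟨by rw [h0, h1]; decide, h0⟩⟩
  have hnot10 : ∀ u w, c2 u = 1 → c2 w = 0 → ¬ Dir u w := by
    rintro u w h1 h0 ⟨-, ⟨hne', h⟩ | ⟨heq, -⟩⟩
    · rw [h1] at h; exact z10 h
    · rw [h1, h0] at heq; exact z10 heq
  have hasymm : ∀ u v, Dir u v → ¬ Dir v u := by
    rintro u v ⟨-, h1⟩ ⟨-, h2⟩
    rcases h1 with ⟨hne1, h01⟩ | ⟨heq1, hr1⟩ <;> rcases h2 with ⟨hne2, h02⟩ | ⟨heq2, hr2⟩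
    · rw [h01, h02] at hne2; exact hne2 rfl
    · exact hne1 heq2.symm
    · exact hne2 heq1.symm
    · exact asymm hr1 hr2
  have hadjiff : ∀ u v, G.Adj u v ↔ (Dir u v ∨ Dir v u) := by
    intro u v
    constructor
    · intro h
      by_cases hc : c2 u = c2 v
      · rcases trichotomous_of WellOrderingRel u v with h1 | h1 | h1
        · exact Or.inl ⟨h, Or.inr ⟨hc, h1⟩⟩
        · exact absurd h1 h.ne
        · exact Or.inr ⟨h.symm, Or.inr ⟨hc.symm, h1⟩⟩
      · by_cases h0 : c2 u = 0
        · exact Or.inl ⟨h, Or.inl ⟨hc, h0⟩⟩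
        · have hv0 : c2 v = 0 := by
            rcases ztwo (c2 u) with h' | h'
            · exact absurd h' h0
            · rcases ztwo (c2 v) with h'' | h''
              · exact h''
              · rw [h', h''] at hc; exact absurd rfl hc
          exact Or.inr ⟨h.symm, Or.inl ⟨Ne.symm hc, hv0⟩⟩
    · rintro (h | h)
      · exact h.1
      · exact h.1.symm
  refine ⟨⟨Dir, hadjiff, hasymm⟩, ?_⟩
  intro f hf
  show ∃! i : ZMod (oddGirth G),
    ¬ ((Dir (f i) (f (i - 1)) ∧ Dir (f i) (f (i + 1))) ∨
       (Dir (f (i - 1)) (f i) ∧ Dir (f (i + 1)) (f i)))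
  have hmem := Nat.sInf_mem hodd
  have hg_odd : Odd (oddGirth G) := hmem.1
  -- 1 ≠ 0 in ZMod (oddGirth G)
  have h1ne : (1 : ZMod (oddGirth G)) ≠ 0 := by
    intro h
    have h2 := hf.2 0
    rw [h, add_zero] at h2
    exact G.loopless.irrefl _ h2
  -- there is a monochromatic edge
  have hmono : ∃ j : ZMod (oddGirth G), c2 (f j) = c2 (f (j + 1)) := by
    by_contra h
    push_neg at h
    have claim : ∀ k : ℕ, c2 (f (k : ZMod (oddGirth G))) = c2 (f 0) + (k : ZMod 2) := by
      intro k
      induction k with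
      | zero => simp
      | succ k ih =>
        have e1 : ((k + 1 : ℕ) : ZMod (oddGirth G)) = (k : ZMod (oddGirth G)) + 1 := by
          push_cast; ring
        have e2 : ((k + 1 : ℕ) : ZMod 2) = (k : ZMod 2) + 1 := by push_cast; ring
        rw [e1, zne _ _ (h _), ih, e2, add_assoc]
    have hzero : ((oddGirth G : ℕ) : ZMod (oddGirth G)) = 0 := ZMod.natCast_self _
    have hone2 : ((oddGirth G : ℕ) : ZMod 2) = 1 := by
      obtain ⟨m, hm⟩ := hg_odd
      rw [hm]
      push_cast
      have h2 : (2 : ZMod 2) = 0 := by decide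
      rw [h2]; ring
    have := claim (oddGirth G)
    rw [hzero, hone2] at this
    exact (by decide : ∀ x : ZMod 2, x ≠ x + 1) _ this
  obtain ⟨j, hj⟩ := hmono
  have hS := hone f hf
  have hnotB : ∀ i, c2 (f i) = c2 (f (i + 1)) → ¬ B.Adj (f i) (f (i + 1)) :=
    fun i h hB' => hcprop _ _ hB' h
  have huniq : ∀ i, c2 (f i) = c2 (f (i + 1)) → i = j :=
    fun i h => hS (hnotB i h) (hnotB j hj)
  have hbi : ∀ i, i ≠ j → c2 (f (i + 1)) = c2 (f i) + 1 :=
    fun i hi => zne _ _ fun h => hi (huniq i h)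
  -- color facts around j
  have hprev : c2 (f (j - 1)) = c2 (f j) + 1 := by
    have hne' : j - 1 ≠ j := fun h => h1ne (by
      have := sub_eq_self.mp h; exact this)
    have h := hbi (j - 1) hne'
    rw [show j - 1 + 1 = j by ring] at h
    exact zflip _ _ h
  have hnext2 : c2 (f (j + 1 + 1)) = c2 (f j) + 1 := by
    have hne' : j + 1 ≠ j := by
      intro h
      have h' : j + 1 = j + 0 := by rw [add_zero]; exact h
      exact h1ne (add_left_cancel h')
    rw [hbi (j + 1) hne', hj]
  -- generic source/sink for vertices away from j, j+1
  have hA : ∀ i : ZMod (oddGirth G), i ≠ j → i ≠ j + 1 →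
      ((Dir (f i) (f (i - 1)) ∧ Dir (f i) (f (i + 1))) ∨
       (Dir (f (i - 1)) (f i) ∧ Dir (f (i + 1)) (f i))) := by
    intro i hij hij1
    have him : i - 1 ≠ j := fun h => hij1 (by rw [← h]; ring)
    have hadj1 : G.Adj (f i) (f (i - 1)) := by
      have := hf.2 (i - 1)
      rw [show i - 1 + 1 = i by ring] at this
      exact this.symm
    have hadj2 : G.Adj (f i) (f (i + 1)) := hf.2 i
    have e1 : c2 (f i) = c2 (f (i - 1)) + 1 := by
      have := hbi (i - 1) him
      rw [show i - 1 + 1 = i by ring] at this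
      exact this
    have e2 : c2 (f (i + 1)) = c2 (f i) + 1 := hbi i hij
    rcases ztwo (c2 (f i)) with h0 | h1
    · -- source
      have hm : c2 (f (i - 1)) = 1 := by
        rcases ztwo (c2 (f (i - 1))) with h | h
        · rw [h0, h] at e1; exact absurd e1 (by decide)
        · exact h
      have hp : c2 (f (i + 1)) = 1 := by rw [e2, h0]; decide
      exact Or.inl ⟨hdir01 _ _ hadj1 h0 hm, hdir01 _ _ hadj2 h0 hp⟩
    · -- sink
      have hm : c2 (f (i - 1)) = 0 := by
        rcases ztwo (c2 (f (i - 1))) with h | h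
        · exact h
        · rw [h1, h] at e1; exact absurd e1 (by decide)
      have hp : c2 (f (i + 1)) = 0 := by rw [e2, h1]; decide
      exact Or.inr ⟨hdir01 _ _ hadj1.symm hm h1, hdir01 _ _ hadj2.symm hp h1⟩
  -- helper for uniqueness
  set P : ZMod (oddGirth G) → Prop := fun i =>
    ((Dir (f i) (f (i - 1)) ∧ Dir (f i) (f (i + 1))) ∨
     (Dir (f (i - 1)) (f i) ∧ Dir (f (i + 1)) (f i))) with hP
  have key : ∀ i0 i1 : ZMod (oddGirth G),
      (i0 = j ∧ i1 = j + 1 ∨ i0 = j + 1 ∧ i1 = j) → ¬ P i0 → P i1 → ∃! i, ¬ P i := by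
    intro i0 i1 hcases h0 h1
    refine ⟨i0, h0, ?_⟩
    intro y hy
    by_contra hne'
    apply hy
    by_cases hyj : y = j
    · rcases hcases with ⟨h, h'⟩ | ⟨h, h'⟩
      · exact absurd (hyj.trans h.symm) hne'
      · rw [hyj, ← h']; exact h1
    · by_cases hyj1 : y = j + 1
      · rcases hcases with ⟨h, h'⟩ | ⟨h, h'⟩
        · rw [hyj1, ← h']; exact h1
        · exact absurd (hyj1.trans h.symm) hne'
      · exact hA y hyj hyj1
  -- preliminaries around j
  have hadjj : G.Adj (f j) (f (j + 1)) := hf.2 j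
  have hadjprev : G.Adj (f (j - 1)) (f j) := by
    have := hf.2 (j - 1); rwa [show j - 1 + 1 = j by ring] at this
  have hadjnext : G.Adj (f (j + 1)) (f (j + 1 + 1)) := hf.2 (j + 1)
  have hsub : j + 1 - 1 = j := by ring
  rcases trichotomous_of WellOrderingRel (f j) (f (j + 1)) with hr | hr | hr
  · -- Dir (f j) (f (j+1))
    have hd : Dir (f j) (f (j + 1)) := ⟨hadjj, Or.inr ⟨hj, hr⟩⟩
    rcases ztwo (c2 (f j)) with ha | ha
    · -- a = 0 : exceptional is j + 1
      refine key (j + 1) j (Or.inr ⟨rfl, rfl⟩) ?_ ?_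
      · simp only [hP, hsub]
        rintro (⟨h', -⟩ | ⟨-, h'⟩)
        · exact hasymm _ _ hd h'
        · exact hnot10 _ _ (by rw [hnext2, ha]; decide) (by rw [← hj]; exact ha) h'
      · simp only [hP]
        exact Or.inl ⟨hdir01 _ _ hadjprev.symm ha (by rw [hprev, ha]; decide), hd⟩
    · -- a = 1 : exceptional is j
      refine key j (j + 1) (Or.inl ⟨rfl, rfl⟩) ?_ ?_
      · simp only [hP]
        rintro (⟨h', -⟩ | ⟨-, h'⟩)
        · exact hnot10 _ _ ha (by rw [hprev, ha]; decide) h'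
        · exact hasymm _ _ hd h'
      · simp only [hP, hsub]
        exact Or.inr ⟨hd, hdir01 _ _ hadjnext.symm (by rw [hnext2, ha]; decide)
          (by rw [← hj]; exact ha)⟩
  · exact absurd hr (fun h => hadjj.ne h)
  · -- Dir (f (j+1)) (f j)
    have hd : Dir (f (j + 1)) (f j) := ⟨hadjj.symm, Or.inr ⟨hj.symm, hr⟩⟩
    rcases ztwo (c2 (f j)) with ha | ha
    · -- a = 0 : exceptional is j
      refine key j (j + 1) (Or.inl ⟨rfl, rfl⟩) ?_ ?_
      · simp only [hP]
        rintro (⟨-, h'⟩ | ⟨h', -⟩)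
        · exact hasymm _ _ hd h'
        · exact hnot10 _ _ (by rw [hprev, ha]; decide) ha h'
      · simp only [hP, hsub]
        exact Or.inl ⟨hd, hdir01 _ _ hadjnext (by rw [← hj]; exact ha)
          (by rw [hnext2, ha]; decide)⟩
    · -- a = 1 : exceptional is j + 1
      refine key (j + 1) j (Or.inr ⟨rfl, rfl⟩) ?_ ?_
      · simp only [hP, hsub]
        rintro (⟨-, h'⟩ | ⟨h', -⟩)
        · exact hnot10 _ _ (by rw [← hj]; exact ha) (by rw [hnext2, ha]; decide) h'
        · exact hasymm _ _ hd h'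
      · simp only [hP]
        exact Or.inr ⟨hdir01 _ _ hadjprev (by rw [hprev, ha]; decide) ha, hd⟩
end

section
/- The Clebsch graph has odd girth 5 and admits an orientation in which every cycle of length 5 is alternating. -/
universe u

/-- The Clebsch graph (folded 5-cube): vertices `F₂⁴`, adjacency iff Hamming distance 1 or 4. -/
def clebsch : SimpleGraph (Fin 4 → ZMod 2) where
  Adj x y := hammingDist x y = 1 ∨ hammingDist x y = 4
  symm := by constructor; intro x y h; rwa [hammingDist_comm]
  loopless := by constructor; intro x h; simp [hammingDist_self] at h

def dirN : Nat → Nat → Bool := fun u v =>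
  match u, v with
  | 1, 0 => true
  | 2, 0 => true
  | 2, 6 => true
  | 2, 10 => true
  | 2, 13 => true
  | 3, 1 => true
  | 3, 2 => true
  | 3, 7 => true
  | 3, 11 => true
  | 3, 12 => true
  | 4, 0 => true
  | 4, 6 => true
  | 4, 11 => true
  | 4, 12 => true
  | 5, 1 => true
  | 5, 4 => true
  | 5, 7 => true
  | 5, 10 => true
  | 5, 13 => true
  | 7, 6 => true
  | 8, 0 => true
  | 8, 7 => true
  | 8, 10 => true
  | 8, 12 => true
  | 9, 1 => true
  | 9, 6 => true
  | 9, 8 => true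
  | 9, 11 => true
  | 9, 13 => true
  | 11, 10 => true
  | 13, 12 => true
  | 14, 1 => true
  | 14, 6 => true
  | 14, 10 => true
  | 14, 12 => true
  | 15, 0 => true
  | 15, 7 => true
  | 15, 11 => true
  | 15, 13 => true
  | 15, 14 => true
  | _, _ => false

def encV (x : Fin 4 → ZMod 2) : Nat :=
  (x 0).val + 2 * (x 1).val + 4 * (x 2).val + 8 * (x 3).val

def adjN (u v : Nat) : Bool := dirN u v || dirN v u

/-- `c` is not a source nor a sink given predecessor `p` and successor `n`. -/
def nss (p c n : Nat) : Bool :=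
  !((dirN c p && dirN c n) || (dirN p c && dirN n c))

def ExOne (n0 n1 n2 n3 n4 : Bool) : Prop :=
  (n0 = true ∧ n1 = false ∧ n2 = false ∧ n3 = false ∧ n4 = false) ∨
  (n0 = false ∧ n1 = true ∧ n2 = false ∧ n3 = false ∧ n4 = false) ∨
  (n0 = false ∧ n1 = false ∧ n2 = true ∧ n3 = false ∧ n4 = false) ∨
  (n0 = false ∧ n1 = false ∧ n2 = false ∧ n3 = true ∧ n4 = false) ∨
  (n0 = false ∧ n1 = false ∧ n2 = false ∧ n3 = false ∧ n4 = true)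

instance (n0 n1 n2 n3 n4 : Bool) : Decidable (ExOne n0 n1 n2 n3 n4) := by
  unfold ExOne; infer_instance

instance : DecidableRel clebsch.Adj :=
  fun x y => inferInstanceAs (Decidable (hammingDist x y = 1 ∨ hammingDist x y = 4))

lemma nss_iff (p c n : Nat) :
    nss p c n = true ↔
      ¬((dirN c p = true ∧ dirN c n = true) ∨ (dirN p c = true ∧ dirN n c = true)) := by
  unfold nss
  cases dirN c p <;> cases dirN c n <;> cases dirN p c <;> cases dirN n c <;> simp

lemma nss_iff_false (p c n : Nat) :
    nss p c n = false ↔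
      ((dirN c p = true ∧ dirN c n = true) ∨ (dirN p c = true ∧ dirN n c = true)) := by
  rw [← Bool.not_eq_true, nss_iff]; tauto

lemma adjV : ∀ x y, clebsch.Adj x y ↔ adjN (encV x) (encV y) = true := by decide

lemma encInj : ∀ x y : Fin 4 → ZMod 2, encV x = encV y → x = y := by decide

lemma enc_lt : ∀ x, encV x < 16 := by decide

lemma dirAsymm : ∀ u v : Fin 4 → ZMod 2,
    dirN (encV u) (encV v) = true → ¬ dirN (encV v) (encV u) = true := by decide

set_option maxHeartbeats 4000000 in
set_option synthInstance.maxHeartbeats 4000000 in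
set_option synthInstance.maxSize 1000000 in
lemma triFree : ∀ a, a < 16 → ∀ b, b < 16 → adjN a b = true →
    ∀ c, c < 16 → adjN b c = true → adjN c a = false := by decide

set_option maxHeartbeats 4000000 in
set_option synthInstance.maxHeartbeats 4000000 in
set_option synthInstance.maxSize 1000000 in
lemma keyK : ∀ a, a < 16 → ∀ b, b < 16 → adjN a b = true →
    ∀ c, c < 16 → adjN b c = true → a ≠ c →
    ∀ d, d < 16 → adjN c d = true → b ≠ d → a ≠ d →
    ∀ e, e < 16 → adjN d e = true → adjN e a = true → c ≠ e → b ≠ e →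
    ExOne (nss e a b) (nss a b c) (nss b c d) (nss c d e) (nss d e a) := by decide

/-- The chosen orientation of the Clebsch graph. -/
def clebschOrient : GraphOrientation clebsch where
  dir u v := dirN (encV u) (encV v) = true
  adj_iff u v := by
    rw [adjV]
    simp [adjN]
  asymm := dirAsymm

lemma cases5 : ∀ y : ZMod 5, y = 0 ∨ y = 1 ∨ y = 2 ∨ y = 3 ∨ y = 4 := by decide

def v0 : Fin 4 → ZMod 2 := ![0,0,0,0]
def v1 : Fin 4 → ZMod 2 := ![1,0,0,0]
def v2 : Fin 4 → ZMod 2 := ![1,1,0,0]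
def v3 : Fin 4 → ZMod 2 := ![1,1,1,0]
def v4 : Fin 4 → ZMod 2 := ![1,1,1,1]

def f5 : ZMod 5 → (Fin 4 → ZMod 2) := ![v0, v1, v2, v3, v4]

lemma f5cyc : clebsch.IsCycleMap f5 := by
  constructor
  · decide
  · decide


theorem statement17 :
    oddGirth clebsch = 5 ∧
      ∃ D : GraphOrientation clebsch,
        ∀ f : ZMod 5 → (Fin 4 → ZMod 2), clebsch.IsCycleMap f → IsAltCycle D.dir f := by
  constructor
  · -- odd girth is 5
    have h5mem : 5 ∈ {n | Odd n ∧ ∃ f : ZMod n → (Fin 4 → ZMod 2), clebsch.IsCycleMap f} :=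
      ⟨⟨2, by norm_num⟩, f5, f5cyc⟩
    apply le_antisymm
    · exact Nat.sInf_le h5mem
    · apply le_csInf ⟨5, h5mem⟩
      rintro n ⟨hodd, f, hinj, hadj⟩
      by_contra hlt
      push_neg at hlt
      interval_cases n
      · exact absurd (Nat.odd_iff.mp hodd) (by decide)
      · -- n = 1 : loop
        have h := hadj 0
        have : (0 : ZMod 1) + 1 = 0 := by decide
        rw [this] at h
        exact clebsch.loopless.irrefl _ h
      · exact absurd (Nat.odd_iff.mp hodd) (by decide)
      · -- n = 3 : triangle
        have h0 := hadj 0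
        have h1 := hadj 1
        have h2 := hadj 2
        have e0 : (0 : ZMod 3) + 1 = 1 := by decide
        have e1 : (1 : ZMod 3) + 1 = 2 := by decide
        have e2 : (2 : ZMod 3) + 1 = 0 := by decide
        rw [e0] at h0; rw [e1] at h1; rw [e2] at h2
        have := triFree _ (enc_lt (f 0)) _ (enc_lt (f 1)) ((adjV _ _).mp h0)
          _ (enc_lt (f 2)) ((adjV _ _).mp h1)
        rw [(adjV _ _).mp h2] at this
        exact absurd this (by decide)
      · exact absurd (Nat.odd_iff.mp hodd) (by decide)
  · refine ⟨clebschOrient, ?_⟩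
    rintro f ⟨hinj, hadj⟩
    have ne : ∀ i j : ZMod 5, i ≠ j → encV (f i) ≠ encV (f j) := by
      intro i j hij h
      exact hij (hinj (encInj _ _ h))
    have e0 : (0 : ZMod 5) + 1 = 1 := by decide
    have e1 : (1 : ZMod 5) + 1 = 2 := by decide
    have e2 : (2 : ZMod 5) + 1 = 3 := by decide
    have e3 : (3 : ZMod 5) + 1 = 4 := by decide
    have e4 : (4 : ZMod 5) + 1 = 0 := by decide
    have h0 := hadj 0; rw [e0] at h0
    have h1 := hadj 1; rw [e1] at h1
    have h2 := hadj 2; rw [e2] at h2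
    have h3 := hadj 3; rw [e3] at h3
    have h4 := hadj 4; rw [e4] at h4
    have hK := keyK _ (enc_lt (f 0)) _ (enc_lt (f 1)) ((adjV _ _).mp h0)
      _ (enc_lt (f 2)) ((adjV _ _).mp h1) (ne 0 2 (by decide))
      _ (enc_lt (f 3)) ((adjV _ _).mp h2) (ne 1 3 (by decide)) (ne 0 3 (by decide))
      _ (enc_lt (f 4)) ((adjV _ _).mp h3) ((adjV _ _).mp h4)
      (ne 2 4 (by decide)) (ne 1 4 (by decide))
    have s0 : (0 : ZMod 5) - 1 = 4 := by decide
    have s1 : (1 : ZMod 5) - 1 = 0 := by decide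
    have s2 : (2 : ZMod 5) - 1 = 1 := by decide
    have s3 : (3 : ZMod 5) - 1 = 2 := by decide
    have s4 : (4 : ZMod 5) - 1 = 3 := by decide
    have body : ∀ p c n : ZMod 5,
        (¬((clebschOrient.dir (f c) (f p) ∧ clebschOrient.dir (f c) (f n)) ∨
           (clebschOrient.dir (f p) (f c) ∧ clebschOrient.dir (f n) (f c)))) ↔
        nss (encV (f p)) (encV (f c)) (encV (f n)) = true :=
      fun p c n => (nss_iff _ _ _).symm
    rcases hK with ⟨hn0,hn1,hn2,hn3,hn4⟩|⟨hn0,hn1,hn2,hn3,hn4⟩|⟨hn0,hn1,hn2,hn3,hn4⟩|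
      ⟨hn0,hn1,hn2,hn3,hn4⟩|⟨hn0,hn1,hn2,hn3,hn4⟩
    all_goals {
      first
      | refine ⟨0, (body 4 0 1).mpr hn0, ?_⟩
      | refine ⟨1, (body 0 1 2).mpr hn1, ?_⟩
      | refine ⟨2, (body 1 2 3).mpr hn2, ?_⟩
      | refine ⟨3, (body 2 3 4).mpr hn3, ?_⟩
      | refine ⟨4, (body 3 4 0).mpr hn4, ?_⟩
      intro y hy
      rcases cases5 y with rfl|rfl|rfl|rfl|rfl <;>
      first
        | rfl
        | exact absurd ((body 4 0 1).mp hy) (by simp [hn0])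
        | exact absurd ((body 0 1 2).mp hy) (by simp [hn1])
        | exact absurd ((body 1 2 3).mp hy) (by simp [hn2])
        | exact absurd ((body 2 3 4).mp hy) (by simp [hn3])
        | exact absurd ((body 3 4 0).mp hy) (by simp [hn4])
    }
end

section
/- For all positive integers m and k, the Kneser graph KG(m(2k+1), mk) admits an orientation in which every cycle of length 2k+1 is alternating; since the odd girth of KG(m(2k+1), mk) equals 2k+1, this orientation makes all shortest odd cycles alternating. -/
universe u

section Aux18

open Finset

lemma aux18_natCast_inj {q a b : ℕ} (ha : a < q) (hb : b < q)
    (h : (a : ZMod q) = (b : ZMod q)) : a = b := by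
  haveI : NeZero q := ⟨by omega⟩
  rw [← ZMod.val_cast_of_lt ha, ← ZMod.val_cast_of_lt hb, h]

lemma aux18_indep_le {q : ℕ} [NeZero q] (S : Finset (ZMod q))
    (hS : ∀ i ∈ S, i + 1 ∉ S) : 2 * S.card ≤ q := by
  classical
  have hinj : Set.InjOn (· + 1) (S : Set (ZMod q)) := fun a _ b _ h => by simpa using h
  have hdisj : Disjoint S (S.image (· + 1)) := by
    rw [Finset.disjoint_right]
    intro a ha hc
    obtain ⟨b, hb, rfl⟩ := Finset.mem_image.mp ha
    exact hS b hb hc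
  have h1 : (S ∪ S.image (· + 1)).card = 2 * S.card := by
    rw [Finset.card_union_of_disjoint hdisj, Finset.card_image_of_injOn hinj]
    ring
  calc 2 * S.card = (S ∪ S.image (· + 1)).card := h1.symm
    _ ≤ Fintype.card (ZMod q) := Finset.card_le_univ _
    _ = q := ZMod.card q

lemma aux18_classify (k : ℕ) (hk : 1 ≤ k) (S : Finset (ZMod (2*k+1)))
    (hS : ∀ i ∈ S, i + 1 ∉ S) (hcard : S.card = k) :
    ∃ w : ZMod (2*k+1), ∀ o : ℕ, o ≤ 2*k →
      ((w + (o : ZMod (2*k+1))) ∈ S ↔ Odd o) := by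
  classical
  haveI : NeZero (2*k+1) := ⟨by omega⟩
  have hsub : S.image (· + 1) ⊆ Sᶜ := by
    intro a ha
    obtain ⟨b, hb, rfl⟩ := Finset.mem_image.mp ha
    simpa using hS b hb
  have hinj : Set.InjOn (· + 1) (S : Set (ZMod (2*k+1))) := fun a _ b _ h => by simpa using h
  have hcard' : (S.image (· + 1)).card = k := by
    rw [Finset.card_image_of_injOn hinj, hcard]
  have hcompl : Sᶜ.card = k + 1 := by
    rw [Finset.card_compl, hcard, ZMod.card]
    omega
  have hone : (Sᶜ \ S.image (· + 1)).card = 1 := by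
    rw [Finset.card_sdiff_of_subset hsub, hcard', hcompl]
    omega
  obtain ⟨w, hw⟩ := Finset.card_eq_one.mp hone
  have hwmem : w ∈ Sᶜ \ S.image (· + 1) := hw ▸ Finset.mem_singleton_self w
  have hwnS : w ∉ S := by
    have h1 := (Finset.mem_sdiff.mp hwmem).1
    simpa using h1
  have key : ∀ i : ZMod (2*k+1), i ∉ S → i ∉ S.image (· + 1) → i = w := by
    intro i h1 h2
    have : i ∈ Sᶜ \ S.image (· + 1) := Finset.mem_sdiff.mpr ⟨Finset.mem_compl.mpr h1, h2⟩
    rw [hw] at this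
    exact Finset.mem_singleton.mp this
  refine ⟨w, ?_⟩
  intro o
  induction o with
  | zero =>
    intro _
    simp only [Nat.cast_zero, add_zero]
    simp [hwnS, Nat.odd_iff]
  | succ o ih =>
    intro ho
    have ho' : o ≤ 2*k := by omega
    have iho := ih ho'
    have hcast : ((o+1 : ℕ) : ZMod (2*k+1)) = (o : ZMod (2*k+1)) + 1 := by push_cast; ring
    rw [hcast, ← add_assoc]
    by_cases hmem : (w + (o : ZMod (2*k+1))) ∈ S
    · have hnot := hS _ hmem
      have hodd : Odd o := iho.mp hmem
      rw [Nat.odd_iff] at hodd ⊢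
      constructor
      · intro h; exact absurd h hnot
      · intro h; omega
    · have hodd : ¬ Odd o := fun h => hmem (iho.mpr h)
      have hin : (w + (o : ZMod (2*k+1))) + 1 ∈ S := by
        by_contra hno
        have hnotS' : (w + (o : ZMod (2*k+1))) + 1 ∉ S.image (· + 1) := by
          intro hmem'
          obtain ⟨b, hb, heq⟩ := Finset.mem_image.mp hmem'
          have hb' : b = w + (o : ZMod (2*k+1)) := add_right_cancel heq
          exact hmem (hb' ▸ hb)
        have heqw := key _ hno hnotS'
        have h0 : ((o+1 : ℕ) : ZMod (2*k+1)) = 0 := by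
          push_cast
          linear_combination heqw
        have hdvd := (ZMod.natCast_eq_zero_iff _ _).mp h0
        have := Nat.le_of_dvd (by omega) hdvd
        omega
      rw [Nat.odd_iff] at hodd ⊢
      constructor
      · intro _; omega
      · intro _; exact hin

lemma aux18_count (m k n : ℕ) [NeZero n]
    (f : ZMod n → {A : Finset (Fin (m * (2 * k + 1))) // A.card = m * k}) :
    ∑ x : Fin (m * (2 * k + 1)),
      (Finset.univ.filter (fun i : ZMod n => x ∈ (f i).1)).card = n * (m * k) := by
  classical
  calc ∑ x : Fin (m * (2 * k + 1)),
        (Finset.univ.filter (fun i : ZMod n => x ∈ (f i).1)).card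
      = ∑ x : Fin (m * (2 * k + 1)), ∑ i : ZMod n, if x ∈ (f i).1 then 1 else 0 := by
        exact Finset.sum_congr rfl fun x _ => Finset.card_filter _ _
    _ = ∑ i : ZMod n, ∑ x : Fin (m * (2 * k + 1)), if x ∈ (f i).1 then 1 else 0 :=
        Finset.sum_comm
    _ = ∑ i : ZMod n, (f i).1.card := by
        refine Finset.sum_congr rfl fun i _ => ?_
        rw [← Finset.card_filter]
        exact congrArg Finset.card (Finset.filter_univ_mem _)
    _ = ∑ _i : ZMod n, m * k := Finset.sum_congr rfl fun i _ => (f i).2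
    _ = n * (m * k) := by
        rw [Finset.sum_const, Finset.card_univ, ZMod.card, smul_eq_mul]

lemma aux18_fiber_card (m k : ℕ) (c : ZMod (2*k+1)) :
    (Finset.univ.filter
      (fun x : Fin (m * (2*k+1)) => ((x : ℕ) : ZMod (2*k+1)) = c)).card = m := by
  classical
  haveI : NeZero (2*k+1) := ⟨by omega⟩
  have hq : 0 < 2*k+1 := by omega
  have e1 : ∀ x : Fin (m*(2*k+1)), (x : ℕ) / (2*k+1) < m := by
    intro x
    exact (Nat.div_lt_iff_lt_mul hq).mpr x.isLt
  have e2 : ∀ t : Fin m, (t : ℕ) * (2*k+1) + c.val < m * (2*k+1) := by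
    intro t
    have h1 : c.val < 2*k+1 := ZMod.val_lt c
    calc (t:ℕ) * (2*k+1) + c.val < (t:ℕ) * (2*k+1) + (2*k+1) := by omega
      _ = ((t:ℕ)+1) * (2*k+1) := by ring
      _ ≤ m * (2*k+1) := Nat.mul_le_mul_right _ t.isLt
  have key : (Finset.univ.filter
      (fun x : Fin (m * (2*k+1)) => ((x : ℕ) : ZMod (2*k+1)) = c)).card
      = (Finset.univ : Finset (Fin m)).card := by
    refine Finset.card_bij'
      (fun (x : Fin (m*(2*k+1))) (_ : x ∈ Finset.univ.filter
        (fun x : Fin (m * (2*k+1)) => ((x : ℕ) : ZMod (2*k+1)) = c)) =>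
          (⟨(x:ℕ)/(2*k+1), e1 x⟩ : Fin m))
      (fun (t : Fin m) (_ : t ∈ Finset.univ) =>
          (⟨(t:ℕ)*(2*k+1) + c.val, e2 t⟩ : Fin (m*(2*k+1)))) ?_ ?_ ?_ ?_
    · intro a _;  exact Finset.mem_univ _
    · intro t _
      simp only [Finset.mem_filter, Finset.mem_univ, true_and]
      rw [Nat.cast_add, Nat.cast_mul, ZMod.natCast_self, mul_zero, zero_add,
        ZMod.natCast_zmod_val]
    · intro x hx
      simp only [Finset.mem_filter, Finset.mem_univ, true_and] at hx
      have hval : c.val = (x : ℕ) % (2*k+1) := by rw [← hx, ZMod.val_natCast]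
      apply Fin.ext
      simp only
      rw [hval, mul_comm, Nat.div_add_mod]
    · intro t _
      apply Fin.ext
      simp only
      rw [mul_comm, Nat.mul_add_div hq, Nat.div_eq_of_lt (ZMod.val_lt c), add_zero]
  simpa using key

def aux18Avert (m k : ℕ) (j : ZMod (2*k+1)) : Finset (Fin (m * (2*k+1))) :=
  Finset.univ.filter (fun x =>
    ∃ e ∈ Finset.range k, ((x : ℕ) : ZMod (2*k+1)) = j - ((2*e : ℕ) : ZMod (2*k+1)))

lemma aux18Avert_mem (m k : ℕ) (j : ZMod (2*k+1)) (x : Fin (m*(2*k+1))) :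
    x ∈ aux18Avert m k j ↔
      ∃ e, e < k ∧ ((x : ℕ) : ZMod (2*k+1)) = j - ((2*e : ℕ) : ZMod (2*k+1)) := by
  simp [aux18Avert]

lemma aux18Avert_card (m k : ℕ) (j : ZMod (2*k+1)) :
    (aux18Avert m k j).card = m * k := by
  classical
  haveI : NeZero (2*k+1) := ⟨by omega⟩
  have hrw : aux18Avert m k j
      = ((Finset.range k).image (fun e => j - ((2*e : ℕ) : ZMod (2*k+1)))).biUnion
          (fun c => Finset.univ.filter
            (fun x : Fin (m*(2*k+1)) => ((x:ℕ) : ZMod (2*k+1)) = c)) := by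
    ext x
    simp only [aux18Avert, Finset.mem_biUnion, Finset.mem_filter, Finset.mem_univ, true_and,
      Finset.mem_image, Finset.mem_range]
    constructor
    · rintro ⟨e, he, hx⟩
      exact ⟨j - ((2*e : ℕ) : ZMod (2*k+1)), ⟨e, he, rfl⟩, hx⟩
    · rintro ⟨c, ⟨e, he, rfl⟩, hx⟩
      exact ⟨e, he, hx⟩
  rw [hrw, Finset.card_biUnion]
  · rw [Finset.sum_congr rfl (fun c _ => aux18_fiber_card m k c), Finset.sum_const,
      smul_eq_mul, Finset.card_image_of_injOn, Finset.card_range, mul_comm]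
    intro a ha b hb hab
    simp only [Finset.coe_sort_coe, Finset.mem_coe, Finset.mem_range] at ha hb
    have h2 : ((2*a : ℕ) : ZMod (2*k+1)) = ((2*b : ℕ) : ZMod (2*k+1)) :=
      sub_right_inj.mp hab
    have := aux18_natCast_inj (by omega) (by omega) h2
    omega
  · intro c hc c' hc' hne
    rw [Function.onFun, Finset.disjoint_left]
    intro x h1 h2
    simp only [Finset.mem_filter, Finset.mem_univ, true_and] at h1 h2
    exact hne (h1 ▸ h2 ▸ rfl)

lemma aux18_fiber_nonempty (m k : ℕ) (hm : 1 ≤ m) (c : ZMod (2*k+1)) :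
    ∃ x : Fin (m * (2*k+1)), ((x : ℕ) : ZMod (2*k+1)) = c := by
  classical
  have h := aux18_fiber_card m k c
  have hne : (Finset.univ.filter
      (fun x : Fin (m * (2*k+1)) => ((x : ℕ) : ZMod (2*k+1)) = c)).Nonempty :=
    Finset.card_pos.mp (by rw [h]; omega)
  obtain ⟨x, hx⟩ := hne
  exact ⟨x, (Finset.mem_filter.mp hx).2⟩

lemma aux18_disj (m k : ℕ) (j : ZMod (2*k+1)) :
    Disjoint (aux18Avert m k j) (aux18Avert m k (j+1)) := by
  rw [Finset.disjoint_left]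
  intro x hx hx'
  obtain ⟨e, he, h1⟩ := (aux18Avert_mem m k j x).mp hx
  obtain ⟨e', he', h2⟩ := (aux18Avert_mem m k (j+1) x).mp hx'
  have hc : ((2*e' : ℕ) : ZMod (2*k+1)) = ((2*e+1 : ℕ) : ZMod (2*k+1)) := by
    push_cast at h1 h2 ⊢
    linear_combination h2 - h1
  have := aux18_natCast_inj (by omega) (by omega) hc
  omega

lemma aux18_inj (m k : ℕ) (hm : 1 ≤ m) (hk : 1 ≤ k) :
    Function.Injective (aux18Avert m k) := by
  intro j j' h
  obtain ⟨x, hx⟩ := aux18_fiber_nonempty m k hm j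
  have hxj : x ∈ aux18Avert m k j :=
    (aux18Avert_mem _ _ _ _).mpr ⟨0, hk, by simpa using hx⟩
  rw [h] at hxj
  obtain ⟨e', he', h1⟩ := (aux18Avert_mem _ _ _ _).mp hxj
  rcases Nat.eq_zero_or_pos e' with rfl | hpos
  · rw [hx] at h1
    simpa using h1
  · exfalso
    obtain ⟨e1, rfl⟩ : ∃ e1, e' = e1 + 1 := ⟨e' - 1, by omega⟩
    obtain ⟨x2, hx2⟩ := aux18_fiber_nonempty m k hm (j' - ((2*e1 : ℕ) : ZMod (2*k+1)))
    have hx2j' : x2 ∈ aux18Avert m k j' :=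
      (aux18Avert_mem _ _ _ _).mpr ⟨e1, by omega, hx2⟩
    rw [← h] at hx2j'
    obtain ⟨e'', he'', h2⟩ := (aux18Avert_mem _ _ _ _).mp hx2j'
    rw [hx] at h1
    rw [hx2] at h2
    have h0 : ((2*e''+2 : ℕ) : ZMod (2*k+1)) = ((0 : ℕ) : ZMod (2*k+1)) := by
      push_cast at h1 h2 ⊢
      linear_combination h1 + h2
    have := aux18_natCast_inj (by omega) (by omega) h0
    omega

lemma aux18_cycle (m k : ℕ) (hm : 1 ≤ m) (hk : 1 ≤ k) :
    ∃ f : ZMod (2*k+1) → {A : Finset (Fin (m * (2*k+1))) // A.card = m * k},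
      (kneserGraph (m * (2*k+1)) (m * k)).IsCycleMap f := by
  haveI : NeZero (2*k+1) := ⟨by omega⟩
  refine ⟨fun j => ⟨aux18Avert m k j, aux18Avert_card m k j⟩, ?_, ?_⟩
  · intro a b hab
    exact aux18_inj m k hm hk (congrArg Subtype.val hab)
  · intro i
    show Disjoint _ _ ∧ _
    refine ⟨aux18_disj m k i, ?_⟩
    intro hEq
    have h2 : i = i + 1 := aux18_inj m k hm hk (congrArg Subtype.val hEq)
    have h3 : (1 : ZMod (2*k+1)) = 0 := (left_eq_add).mp h2
    haveI : Fact (1 < 2*k+1) := ⟨by omega⟩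
    exact one_ne_zero h3

lemma aux18_lower (m k : ℕ) (hm : 1 ≤ m) (hk : 1 ≤ k) (n : ℕ) (hodd : Odd n)
    (f : ZMod n → {A : Finset (Fin (m * (2*k+1))) // A.card = m * k})
    (hf : (kneserGraph (m * (2*k+1)) (m * k)).IsCycleMap f) : 2*k+1 ≤ n := by
  classical
  haveI : NeZero n := ⟨fun h => by subst h; simp [Nat.odd_iff] at hodd⟩
  have hcount := aux18_count m k n f
  have hn2 : n % 2 = 1 := Nat.odd_iff.mp hodd
  have hle : ∀ x : Fin (m*(2*k+1)),
      2 * (Finset.univ.filter (fun i : ZMod n => x ∈ (f i).1)).card + 1 ≤ n := by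
    intro x
    have hind : ∀ i ∈ Finset.univ.filter (fun i : ZMod n => x ∈ (f i).1),
        i + 1 ∉ Finset.univ.filter (fun i : ZMod n => x ∈ (f i).1) := by
      intro i hi hi1
      simp only [Finset.mem_filter, Finset.mem_univ, true_and] at hi hi1
      exact Finset.disjoint_left.mp (show Disjoint _ _ ∧ _ from hf.2 i).1 hi hi1
    have h2 := aux18_indep_le _ hind
    omega
  have hsum2 : 2 * (n * (m * k)) ≤ (m * (2*k+1)) * (n - 1) := by
    calc 2 * (n * (m*k))
        = ∑ x : Fin (m*(2*k+1)),
            2 * (Finset.univ.filter (fun i : ZMod n => x ∈ (f i).1)).card := by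
          rw [← Finset.mul_sum, hcount]
      _ ≤ ∑ _x : Fin (m*(2*k+1)), (n-1) :=
          Finset.sum_le_sum (fun x _ => by have := hle x; omega)
      _ = (m*(2*k+1)) * (n-1) := by
          rw [Finset.sum_const, Finset.card_univ, Fintype.card_fin, smul_eq_mul]
  obtain ⟨t, rfl⟩ := hodd
  have h3 : 2*(2*t+1)*k ≤ (2*k+1)*(2*t) := by
    have h4 : m * (2*(2*t+1)*k) ≤ m * ((2*k+1)*(2*t)) := by
      calc m * (2*(2*t+1)*k) = 2*((2*t+1)*(m*k)) := by ring
        _ ≤ (m*(2*k+1))*((2*t+1)-1) := hsum2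
        _ = m * ((2*k+1)*(2*t)) := by rw [Nat.add_sub_cancel]; ring
    exact Nat.le_of_mul_le_mul_left h4 (by omega)
  nlinarith [h3]

def aux18Orient (m k : ℕ) (hpos : 0 < m * (2*k+1)) :
    GraphOrientation (kneserGraph (m * (2*k+1)) (m * k)) where
  dir A B := (kneserGraph (m * (2*k+1)) (m * k)).Adj A B ∧
    ((⟨0, hpos⟩ : Fin (m * (2*k+1))) ∈ A.1 ∨
      ((⟨0, hpos⟩ : Fin (m * (2*k+1))) ∉ A.1 ∧ (⟨0, hpos⟩ : Fin (m * (2*k+1))) ∉ B.1 ∧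
        WellOrderingRel A B))
  adj_iff := by
    intro A B
    constructor
    · intro hAdj
      by_cases hA : (⟨0, hpos⟩ : Fin (m * (2*k+1))) ∈ A.1
      · exact Or.inl ⟨hAdj, Or.inl hA⟩
      · by_cases hB : (⟨0, hpos⟩ : Fin (m * (2*k+1))) ∈ B.1
        · exact Or.inr ⟨hAdj.symm, Or.inl hB⟩
        · rcases trichotomous_of WellOrderingRel A B with h | h | h
          · exact Or.inl ⟨hAdj, Or.inr ⟨hA, hB, h⟩⟩
          · exact absurd h (show Disjoint _ _ ∧ _ from hAdj).2
          · exact Or.inr ⟨hAdj.symm, Or.inr ⟨hB, hA, h⟩⟩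
    · rintro (h | h)
      · exact h.1
      · exact h.1.symm
  asymm := by
    intro A B h1 h2
    have hdisj : Disjoint A.1 B.1 := (show Disjoint _ _ ∧ _ from h1.1).1
    rcases h1.2 with hA | ⟨hnA, hnB, hw⟩
    · rcases h2.2 with hB | ⟨hnB, hnA, _⟩
      · exact Finset.disjoint_left.mp hdisj hA hB
      · exact hnA hA
    · rcases h2.2 with hB | ⟨hnB', hnA', hw'⟩
      · exact hnB hB
      · exact (IsWellFounded.wf (r := WellOrderingRel)).asymmetric _ _ hw hw'

end Aux18


theorem statement18 (m k : ℕ) (hm : 1 ≤ m) (hk : 1 ≤ k) :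
    oddGirth (kneserGraph (m * (2 * k + 1)) (m * k)) = 2 * k + 1 ∧
      ∃ D : GraphOrientation (kneserGraph (m * (2 * k + 1)) (m * k)),
        ∀ f : ZMod (2 * k + 1) → {A : Finset (Fin (m * (2 * k + 1))) // A.card = m * k},
          (kneserGraph (m * (2 * k + 1)) (m * k)).IsCycleMap f → IsAltCycle D.dir f := by
  classical
  haveI : NeZero (2*k+1) := ⟨by omega⟩
  have hpos : 0 < m * (2*k+1) := Nat.mul_pos hm (by omega)
  obtain ⟨f0, hf0⟩ := aux18_cycle m k hm hk
  have hmem : (2*k+1) ∈ {n | Odd n ∧ ∃ f : ZMod n →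
      {A : Finset (Fin (m * (2 * k + 1))) // A.card = m * k},
      (kneserGraph (m * (2 * k + 1)) (m * k)).IsCycleMap f} := ⟨⟨k, by ring⟩, f0, hf0⟩
  constructor
  · unfold oddGirth
    apply le_antisymm
    · exact Nat.sInf_le hmem
    · apply le_csInf ⟨_, hmem⟩
      rintro n ⟨hodd, f, hf⟩
      exact aux18_lower m k hm hk n hodd f hf
  · refine ⟨aux18Orient m k hpos, ?_⟩
    intro f hf
    set x0 : Fin (m*(2*k+1)) := ⟨0, hpos⟩ with hx0
    set Dd := (aux18Orient m k hpos).dir with hDd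
    have KD : ∀ A B, (kneserGraph (m*(2*k+1)) (m*k)).Adj A B → x0 ∈ A.1 → Dd A B :=
      fun A B hAdj hx => ⟨hAdj, Or.inl hx⟩
    have hasym : ∀ A B, Dd A B → ¬ Dd B A := (aux18Orient m k hpos).asymm
    have htot : ∀ i : ZMod (2*k+1), ¬ Dd (f i) (f (i+1)) → Dd (f (i+1)) (f i) := by
      intro i h
      exact (((aux18Orient m k hpos).adj_iff _ _).mp (hf.2 i)).resolve_left h
    -- the set of indices whose set contains x0
    set S : Finset (ZMod (2*k+1)) := Finset.univ.filter (fun i => x0 ∈ (f i).1) with hS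
    have hSind : ∀ i ∈ S, i + 1 ∉ S := by
      intro i hi hi1
      rw [hS, Finset.mem_filter] at hi hi1
      exact Finset.disjoint_left.mp (show Disjoint _ _ ∧ _ from hf.2 i).1 hi.2 hi1.2
    have hScard : S.card = k := by
      have hcount := aux18_count m k (2*k+1) f
      have hle : ∀ x : Fin (m*(2*k+1)),
          (Finset.univ.filter (fun i : ZMod (2*k+1) => x ∈ (f i).1)).card ≤ k := by
        intro x
        have hind : ∀ i ∈ Finset.univ.filter (fun i : ZMod (2*k+1) => x ∈ (f i).1),
            i + 1 ∉ Finset.univ.filter (fun i : ZMod (2*k+1) => x ∈ (f i).1) := by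
          intro i hi hi1
          simp only [Finset.mem_filter, Finset.mem_univ, true_and] at hi hi1
          exact Finset.disjoint_left.mp (show Disjoint _ _ ∧ _ from hf.2 i).1 hi hi1
        have := aux18_indep_le _ hind
        omega
      by_contra hne
      have hlt : S.card < k := lt_of_le_of_ne (hle x0) hne
      have hstrict : ∑ x : Fin (m*(2*k+1)),
          (Finset.univ.filter (fun i : ZMod (2*k+1) => x ∈ (f i).1)).card
          < ∑ _x : Fin (m*(2*k+1)), k :=
        Finset.sum_lt_sum (fun x _ => hle x) ⟨x0, Finset.mem_univ x0, hlt⟩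
      rw [hcount, Finset.sum_const, Finset.card_univ, Fintype.card_fin, smul_eq_mul] at hstrict
      rw [show (2*k+1) * (m*k) = m*(2*k+1)*k from by ring] at hstrict
      exact lt_irrefl _ hstrict
    obtain ⟨w, hw⟩ := aux18_classify k hk S hSind hScard
    have hF1 : ∀ o : ℕ, o ≤ 2*k → (x0 ∈ (f (w + (o : ZMod (2*k+1)))).1 ↔ Odd o) := by
      intro o ho
      rw [← hw o ho, hS]
      simp [Finset.mem_filter]
    -- index arithmetic
    have z1 : ∀ o : ℕ, (w + (o : ZMod (2*k+1))) + 1 = w + ((o+1 : ℕ) : ZMod (2*k+1)) := by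
      intro o; push_cast; ring
    have z2 : (w + ((2*k : ℕ) : ZMod (2*k+1))) + 1 = w := by
      have h0 : ((2*k+1 : ℕ) : ZMod (2*k+1)) = 0 := ZMod.natCast_self _
      push_cast at h0 ⊢
      linear_combination h0
    have z3 : w - 1 = w + ((2*k : ℕ) : ZMod (2*k+1)) := (eq_sub_of_add_eq z2).symm
    have z4 : ∀ o : ℕ, (w + ((o+1 : ℕ) : ZMod (2*k+1))) - 1 = w + (o : ZMod (2*k+1)) := by
      intro o; push_cast; ring
    have z0 : w + ((0 : ℕ) : ZMod (2*k+1)) = w := by push_cast; ring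
    -- directions of the known edges
    have HD : ∀ o : ℕ, o < 2*k →
        (Dd (f (w + (o : ZMod (2*k+1)))) (f (w + ((o+1:ℕ) : ZMod (2*k+1)))) ↔ Odd o) := by
      intro o ho
      constructor
      · intro hdir
        by_contra hodd
        have ho1 : Odd (o+1) := by rw [Nat.odd_iff] at hodd ⊢; omega
        have hx : x0 ∈ (f (w + ((o+1:ℕ) : ZMod (2*k+1)))).1 := (hF1 (o+1) (by omega)).mpr ho1
        have hAdj := hf.2 (w + (o : ZMod (2*k+1)))
        rw [z1 o] at hAdj
        exact hasym _ _ hdir (KD _ _ hAdj.symm hx)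
      · intro hodd
        have hx : x0 ∈ (f (w + (o : ZMod (2*k+1)))).1 := (hF1 o (by omega)).mpr hodd
        have hAdj := hf.2 (w + (o : ZMod (2*k+1)))
        rw [z1 o] at hAdj
        exact KD _ _ hAdj hx
    have hfor : ∀ o : ℕ, o < 2*k → Odd o →
        Dd (f (w + (o : ZMod (2*k+1)))) (f (w + ((o+1:ℕ) : ZMod (2*k+1)))) :=
      fun o ho hodd => (HD o ho).mpr hodd
    have htot' : ∀ o : ℕ, o < 2*k → ¬ Odd o →
        Dd (f (w + ((o+1:ℕ) : ZMod (2*k+1)))) (f (w + (o : ZMod (2*k+1)))) := by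
      intro o ho hodd
      have h := htot (w + (o : ZMod (2*k+1)))
      rw [z1 o] at h
      exact h (fun hcon => hodd ((HD o ho).mp hcon))
    -- middle vertices are sources or sinks
    have hmid : ∀ o' : ℕ, o' + 1 < 2*k →
        ((Dd (f (w + ((o'+1:ℕ) : ZMod (2*k+1)))) (f ((w + ((o'+1:ℕ) : ZMod (2*k+1))) - 1)) ∧
          Dd (f (w + ((o'+1:ℕ) : ZMod (2*k+1)))) (f ((w + ((o'+1:ℕ) : ZMod (2*k+1))) + 1))) ∨
         (Dd (f ((w + ((o'+1:ℕ) : ZMod (2*k+1))) - 1)) (f (w + ((o'+1:ℕ) : ZMod (2*k+1)))) ∧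
          Dd (f ((w + ((o'+1:ℕ) : ZMod (2*k+1))) + 1)) (f (w + ((o'+1:ℕ) : ZMod (2*k+1)))))) := by
      intro o' ho'
      rw [z4 o', z1 (o'+1)]
      by_cases hodd : Odd (o'+1)
      · left
        constructor
        · exact htot' o' (by omega) (by rw [Nat.odd_iff] at hodd ⊢; omega)
        · exact hfor (o'+1) ho' hodd
      · right
        constructor
        · exact hfor o' (by omega) (by rw [Nat.odd_iff] at hodd ⊢; omega)
        · exact htot' (o'+1) ho' hodd
    have huniq_setup : ∀ j : ZMod (2*k+1), ∃ o : ℕ, o ≤ 2*k ∧ j = w + (o : ZMod (2*k+1)) := by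
      intro j
      refine ⟨(j - w).val, ?_, ?_⟩
      · have := ZMod.val_lt (j - w); omega
      · rw [ZMod.natCast_zmod_val]; ring
    obtain ⟨K, hK⟩ : ∃ K, 2*k = K + 1 := ⟨2*k - 1, by omega⟩
    have hKodd : Odd K := by rw [Nat.odd_iff]; omega
    have zK : (w + ((K+1 : ℕ) : ZMod (2*k+1))) + 1 = w := by rw [← hK]; exact z2
    have zK' : w - 1 = w + ((K+1:ℕ) : ZMod (2*k+1)) := by rw [← hK]; exact z3
    have e01 : w + ((0+1 : ℕ) : ZMod (2*k+1)) = w + 1 := by push_cast; ring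
    unfold IsAltCycle
    by_cases hb : Dd (f (w + ((K+1 : ℕ) : ZMod (2*k+1)))) (f w)
    · refine ⟨w + ((K+1:ℕ) : ZMod (2*k+1)), ?_, ?_⟩
      · intro hor
        rcases hor with ⟨h1, _⟩ | ⟨_, h2⟩
        · rw [z4 K] at h1
          exact hasym _ _ (hfor K (by omega) hKodd) h1
        · rw [zK] at h2
          exact hasym _ _ hb h2
      · intro j hQ
        obtain ⟨o, ho, rfl⟩ := huniq_setup j
        rcases Nat.lt_or_ge o 1 with h0 | h1
        · exfalso
          have ho0 : o = 0 := by omega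
          subst ho0
          rw [z0] at hQ
          apply hQ
          refine Or.inr ⟨?_, ?_⟩
          · rw [zK']
            exact hb
          · have h := htot' 0 (by omega) (by rw [Nat.odd_iff]; omega)
            rw [z0, e01] at h
            exact h
        · rcases Nat.lt_or_ge o (K+1) with hmid' | hhigh
          · exfalso
            obtain ⟨o', rfl⟩ : ∃ o', o = o'+1 := ⟨o-1, by omega⟩
            exact hQ (hmid o' (by omega))
          · have ho' : o = K+1 := by omega
            rw [ho']
    · have hb' : Dd (f w) (f (w + ((K+1:ℕ) : ZMod (2*k+1)))) := by
        have h := htot (w + ((K+1:ℕ) : ZMod (2*k+1)))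
        rw [zK] at h
        exact h hb
      refine ⟨w, ?_, ?_⟩
      · intro hor
        rcases hor with ⟨_, h2⟩ | ⟨h1, _⟩
        · have hiff := HD 0 (by omega)
          rw [z0, e01] at hiff
          have : Odd 0 := hiff.mp h2
          rw [Nat.odd_iff] at this
          omega
        · rw [zK'] at h1
          exact hasym _ _ hb' h1
      · intro j hQ
        obtain ⟨o, ho, rfl⟩ := huniq_setup j
        rcases Nat.lt_or_ge o 1 with h0 | h1
        · have ho0 : o = 0 := by omega
          rw [ho0]
          exact z0
        · rcases Nat.lt_or_ge o (K+1) with hmid' | hhigh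
          · exfalso
            obtain ⟨o', rfl⟩ : ∃ o', o = o'+1 := ⟨o-1, by omega⟩
            exact hQ (hmid o' (by omega))
          · exfalso
            have ho' : o = K+1 := by omega
            subst ho'
            apply hQ
            refine Or.inr ⟨?_, ?_⟩
            · rw [z4 K]
              exact hfor K (by omega) hKodd
            · rw [zK]
              exact hb'
end
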